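/- arXiv:2006.02015 — 2 statements merged into one kernel-verified Lean document; each statement's English description precedes it below -/
import Mathlib

section
/- Let G be a vertex-critical graph with χ(G) = Δ(G). Then G contains no nonempty induced subgraph H that is d_1-choosable. -/
open SimpleGraph

/-- Maximum degree of a finite graph. -/
noncomputable def maxDeg {V : Type*} [Fintype V] (G : SimpleGraph V) : ℕ :=
  Finset.univ.sup fun v => (G.neighborSet v).ncard

/-- A graph is vertex-critical if deleting any vertex decreases the chromatic number. -/
def VertexCritical {V : Type*} (G : SimpleGraph V) : Prop :=
  ∀ v : V, (G.induce {v}ᶜ).chromaticNumber < G.chromaticNumber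

/-- A graph `H` is `d₁`-choosable: for every list assignment giving each vertex `v`
a list of `d_H(v) - 1` colors, there is a proper coloring from the lists. -/
def D1Choosable {W : Type*} (H : SimpleGraph W) : Prop :=
  ∀ L : W → Finset ℕ, (∀ v, (L v).card = (H.neighborSet v).ncard - 1) →
    ∃ φ : W → ℕ, (∀ v, φ v ∈ L v) ∧ ∀ u v, H.Adj u v → φ u ≠ φ v

theorem stmt4 {V : Type*} [Fintype V] (G : SimpleGraph V)
    (hcrit : VertexCritical G)
    (hchi : G.chromaticNumber = (maxDeg G : ℕ∞)) :
    ∀ s : Set V, s.Nonempty → ¬ D1Choosable (G.induce s) := by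
  classical
  intro s hs hD1
  set n := maxDeg G with hn
  obtain ⟨v₀, hv₀⟩ := hs
  have : Nonempty V := ⟨v₀⟩
  -- n ≥ 1
  have hn1 : 1 ≤ n := by
    have h0 : 0 < G.chromaticNumber := chromaticNumber_pos (G.colorable_of_fintype)
    rw [hchi] at h0
    exact_mod_cast h0
  -- coloring of G - v₀ with n-1 colors
  have hlt := hcrit v₀
  rw [hchi] at hlt
  have hcol : (G.induce {v₀}ᶜ).Colorable (n - 1) := by
    rw [← chromaticNumber_le_iff_colorable]
    have h2 : ((n - 1 : ℕ) : ℕ∞) + 1 = (n : ℕ∞) := by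
      norm_cast
      omega
    rw [← h2] at hlt
    exact (ENat.lt_add_one_iff (by simp)).mp hlt
  obtain ⟨c⟩ := hcol
  -- total function version of c
  set g : V → ℕ := fun x => if h : x ≠ v₀ then (c ⟨x, h⟩ : ℕ) else 0 with hg
  have hgval : ∀ x (h : x ≠ v₀), g x = (c ⟨x, h⟩ : ℕ) := by
    intro x h; simp [hg, h]
  have hglt : ∀ x, x ≠ v₀ → g x < n - 1 := by
    intro x h; rw [hgval x h]; exact (c ⟨x, h⟩).2
  have hgproper : ∀ x y, x ≠ v₀ → y ≠ v₀ → G.Adj x y → g x ≠ g y := by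
    intro x y hx hy hadj
    rw [hgval x hx, hgval y hy]
    have : (G.induce {v₀}ᶜ).Adj ⟨x, hx⟩ ⟨y, hy⟩ := by
      simp [hadj]
    have := c.valid this
    exact fun h => this (Fin.val_injective h)
  -- degree bookkeeping
  set outN : s → Finset V := fun w => (G.neighborFinset w.1).filter (fun u => u ∉ s) with houtN
  set dH : s → ℕ := fun w => ((G.induce s).neighborSet w).ncard with hdH
  have hdeg : ∀ w : s, dH w + (outN w).card ≤ n := by
    intro w
    have h1 : dH w = ((G.neighborFinset w.1).filter (fun u => u ∈ s)).card := by
      rw [hdH]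
      rw [← Set.ncard_coe_finset]
      have himg : Subtype.val '' ((G.induce s).neighborSet w)
          = ↑((G.neighborFinset w.1).filter (fun u => u ∈ s)) := by
        ext x
        simp only [Set.mem_image, mem_neighborSet, Finset.coe_filter, Set.mem_setOf_eq,
          Finset.mem_coe, mem_neighborFinset, comap_adj, Function.Embedding.coe_subtype]
        constructor
        · rintro ⟨u, hu, rfl⟩
          exact ⟨hu, u.2⟩
        · rintro ⟨hadj, hx⟩
          exact ⟨⟨x, hx⟩, hadj, rfl⟩
      rw [← himg, Set.ncard_image_of_injective _ Subtype.val_injective]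
    have h2 : ((G.neighborFinset w.1).filter (fun u => u ∈ s)).card + (outN w).card
        = (G.neighborFinset w.1).card := by
      rw [houtN]
      exact Finset.card_filter_add_card_filter_not _
    have h3 : (G.neighborFinset w.1).card ≤ n := by
      rw [hn, maxDeg]
      have : (G.neighborFinset w.1).card = (G.neighborSet w.1).ncard := by
        rw [neighborFinset_def, Set.ncard_eq_toFinset_card']
      rw [this]
      exact Finset.le_sup (f := fun v => (G.neighborSet v).ncard) (Finset.mem_univ w.1)
    omega
  -- available colors
  set A : s → Finset ℕ := fun w => (Finset.range (n - 1)) \ ((outN w).image g) with hA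
  have hAcard : ∀ w : s, dH w - 1 ≤ (A w).card := by
    intro w
    have h1 : (Finset.range (n-1)).card - ((outN w).image g).card ≤ (A w).card :=
      Finset.le_card_sdiff _ _
    have h2 : ((outN w).image g).card ≤ (outN w).card := Finset.card_image_le
    have h3 := hdeg w
    rw [Finset.card_range] at h1
    omega
  -- choose lists
  have hL : ∀ w : s, ∃ t ⊆ A w, t.card = dH w - 1 := fun w =>
    Finset.exists_subset_card_eq (hAcard w)
  choose L hLsub hLcard using hL
  obtain ⟨φ, hφmem, hφproper⟩ := hD1 L hLcard
  -- φ values are in A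
  have hφA : ∀ w : s, φ w ∈ A w := fun w => hLsub w (hφmem w)
  -- combined coloring
  set f : V → ℕ := fun x => if h : x ∈ s then φ ⟨x, h⟩ else g x with hf
  have hflt : ∀ x, f x < n - 1 := by
    intro x
    by_cases h : x ∈ s
    · have := hφA ⟨x, h⟩
      rw [hA] at this
      have := Finset.mem_sdiff.mp this
      simp only [Finset.mem_range] at this
      simp [hf, h, this.1]
    · have hxne : x ≠ v₀ := fun he => h (he ▸ hv₀)
      simp only [hf, h, dif_neg]
      simpa using hglt x hxne
  have hfproper : ∀ x y, G.Adj x y → f x ≠ f y := by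
    have key : ∀ x y, G.Adj x y → x ∈ s → y ∉ s → f x ≠ f y := by
      intro x y hadj hx hy
      have hyout : y ∈ outN ⟨x, hx⟩ := by
        rw [houtN]
        simp [mem_neighborFinset, hadj, hy]
      have := hφA ⟨x, hx⟩
      rw [hA] at this
      have h2 := (Finset.mem_sdiff.mp this).2
      simp only [hf, dif_pos hx, dif_neg hy]
      intro he
      exact h2 (Finset.mem_image.mpr ⟨y, hyout, he.symm⟩)
    intro x y hadj
    by_cases hx : x ∈ s <;> by_cases hy : y ∈ s
    · have hadj' : (G.induce s).Adj ⟨x, hx⟩ ⟨y, hy⟩ := by simp [hadj]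
      simpa [hf, hx, hy] using hφproper _ _ hadj'
    · exact key x y hadj hx hy
    · exact fun h => key y x hadj.symm hy hx h.symm
    · have hxne : x ≠ v₀ := fun he => hx (he ▸ hv₀)
      have hyne : y ≠ v₀ := fun he => hy (he ▸ hv₀)
      simpa [hf, hx, hy] using hgproper x y hxne hyne hadj
  -- conclude
  have hcolG : G.Colorable (n - 1) := by
    rw [colorable_iff_exists_bdd_nat_coloring]
    exact ⟨Coloring.mk f (fun {x y} h => hfproper x y h), hflt⟩
  have := hcolG.chromaticNumber_le
  rw [hchi] at this
  have : (n : ℕ∞) ≤ ((n - 1 : ℕ) : ℕ∞) := this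
  rw [Nat.cast_le] at this
  omega
end

section
/- The complement of every odd cycle of length at least 7 contains an induced gem. -/
open SimpleGraph

/-- The gem: the join `K₁ ∨ P₄`, with apex vertex `4` and path `0 - 1 - 2 - 3`. -/
def gem : SimpleGraph (Fin 5) :=
  fromEdgeSet {s(0, 1), s(1, 2), s(2, 3), s(0, 4), s(1, 4), s(2, 4), s(3, 4)}

lemma fin_sub_val (N a b : ℕ) (ha : a < N) (hb : b < N) :
    ((⟨a,ha⟩ - ⟨b,hb⟩ : Fin N)).val = if b ≤ a then a - b else a + N - b := by
  rw [Fin.sub_def]; dsimp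
  rcases le_or_gt b a with h | h
  · rw [if_pos h, show N - b + a = (a - b) + N from by omega, Nat.add_mod_right,
      Nat.mod_eq_of_lt (by omega)]
  · rw [if_neg (by omega), Nat.mod_eq_of_lt (by omega)]; omega

set_option maxHeartbeats 2000000 in
theorem stmt7 (n : ℕ) (h7 : 7 ≤ n) (hodd : Odd n) :
    ∃ s : Set (Fin n), Nonempty (gem ≃g ((cycleGraph n)ᶜ).induce s) := by
  let f : Fin 5 → Fin n := ![⟨1, by omega⟩, ⟨3, by omega⟩, ⟨0, by omega⟩, ⟨2, by omega⟩, ⟨5, by omega⟩]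
  have hinj : Function.Injective f := by
    intro a b hab
    fin_cases a <;> fin_cases b <;> simp_all [f, Fin.ext_iff]
  refine ⟨Set.range f, ⟨{ toEquiv := Equiv.ofInjective f hinj, map_rel_iff' := ?_ }⟩⟩
  intro a b
  simp only [Equiv.ofInjective_apply, comap_adj, Function.Embedding.coe_subtype,
    compl_adj, cycleGraph_adj']
  fin_cases a <;> fin_cases b <;>
    simp [f, gem, Fin.ext_iff, fin_sub_val, Sym2.eq, Sym2.rel_iff'] <;> omega
end
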